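/- If P = e_1…e_k is a funnel all of whose arc gains lie in [−B, B], then every contiguous subpath e_i…e_j (1 ≤ i ≤ j ≤ k) of P is a funnel. -/
import Mathlib


open Finset

namespace EV

noncomputable section

/-- Charge after traversing `i` arcs of a path with arc gains `g`, battery capacity `B`,
initial charge `b`. -/
def charge (B b : ℝ) (g : ℕ → ℝ) : ℕ → ℝ
  | 0 => b
  | i + 1 => min (charge B b g i + g i) B

/-- The traversal of the path with `n` arcs is feasible from initial charge `b`. -/
def Feasible (B b : ℝ) (g : ℕ → ℝ) (n : ℕ) : Prop :=
  ∀ i < n, 0 ≤ charge B b g i + g i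

open Classical in
/-- Maximum final charge `α_b(P)` for a path `P` with `n` arc gains `g`,
as an extended real (`⊥ = -∞` if the traversal is infeasible). -/
def alpha (B b : ℝ) (g : ℕ → ℝ) (n : ℕ) : EReal :=
  if Feasible B b g n then ((charge B b g n : ℝ) : EReal) else ⊥

/-- Gain of the `i`-th vertex (0-indexed): the sum of the first `i` arc gains. -/
def vGain (g : ℕ → ℝ) (i : ℕ) : ℝ := ∑ t ∈ Finset.range i, g t

/-- `P` is traversable: `α_B(P) ≥ 0`, i.e. feasible from a full battery. -/
def Traversable (B : ℝ) (g : ℕ → ℝ) (n : ℕ) : Prop := Feasible B B g n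

/-- `C` is a charge drop schedule for a path with `n` arcs (vertices `0,…,n`):
no drop at the first vertex, all drops nonnegative. -/
def Schedule (C : ℕ → ℝ) (n : ℕ) : Prop := C 0 = 0 ∧ ∀ i ≤ n, 0 ≤ C i

/-- Gain of vertex `i` with respect to the charge drop schedule `C`. -/
def cGain (g C : ℕ → ℝ) (i : ℕ) : ℝ := vGain g i - ∑ t ∈ Finset.range (i + 1), C t

/-- `P` (with `n` arcs) is ascending with respect to the schedule `C`. -/
def AscendingC (B : ℝ) (g C : ℕ → ℝ) (n : ℕ) : Prop :=
  Traversable B g n ∧ ∀ i ≤ n, 0 ≤ cGain g C i ∧ cGain g C i ≤ cGain g C n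

/-- `P` (with `n` arcs) is descending with respect to the schedule `C`. -/
def DescendingC (B : ℝ) (g C : ℕ → ℝ) (n : ℕ) : Prop :=
  Traversable B g n ∧ ∀ i ≤ n, cGain g C n ≤ cGain g C i ∧ cGain g C i ≤ 0

/-- `P` is monotone with respect to the schedule `C`. -/
def MonotoneC (B : ℝ) (g C : ℕ → ℝ) (n : ℕ) : Prop :=
  AscendingC B g C n ∨ DescendingC B g C n

/-- Ascending with respect to the zero schedule. -/
def Ascending (B : ℝ) (g : ℕ → ℝ) (n : ℕ) : Prop := AscendingC B g (fun _ => 0) n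

/-- Descending with respect to the zero schedule. -/
def Descending (B : ℝ) (g : ℕ → ℝ) (n : ℕ) : Prop := DescendingC B g (fun _ => 0) n

/-- Monotone with respect to the zero schedule. -/
def MonotonePath (B : ℝ) (g : ℕ → ℝ) (n : ℕ) : Prop := Ascending B g n ∨ Descending B g n

/-- The contiguous subpath whose arcs start at arc index `a`. -/
def SubPath (g : ℕ → ℝ) (a : ℕ) : ℕ → ℝ := fun t => g (a + t)

/-- Restriction of a charge drop schedule to the subpath starting at vertex `a`:
no drop at the subpath's first vertex. -/
def restrict (C : ℕ → ℝ) (a : ℕ) : ℕ → ℝ := fun t => if t = 0 then 0 else C (a + t)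

/-- First-arc-bounded with respect to a schedule `C` (no drop at the second vertex,
and all vertex gains lie between the gains of the first two vertices). -/
def FirstArcBoundedC (g C : ℕ → ℝ) (n : ℕ) : Prop :=
  C 1 = 0 ∧
    ((0 ≤ g 0 ∧ ∀ i ≤ n, 0 ≤ cGain g C i ∧ cGain g C i ≤ g 0) ∨
     (g 0 ≤ 0 ∧ ∀ i ≤ n, g 0 ≤ cGain g C i ∧ cGain g C i ≤ 0))

/-- Last-arc-bounded with respect to a schedule `C` (no drops at the last two vertices,
and all vertex gains lie between the gains of the last two vertices). -/
def LastArcBoundedC (g C : ℕ → ℝ) (n : ℕ) : Prop :=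
  C (n - 1) = 0 ∧ C n = 0 ∧
    ((0 ≤ g (n - 1) ∧ ∀ i ≤ n, cGain g C (n - 1) ≤ cGain g C i ∧ cGain g C i ≤ cGain g C n) ∨
     (g (n - 1) < 0 ∧ ∀ i ≤ n, cGain g C n ≤ cGain g C i ∧ cGain g C i ≤ cGain g C (n - 1)))

/-- First-arc-bounded (zero schedule). -/
def FirstArcBounded (g : ℕ → ℝ) (n : ℕ) : Prop := FirstArcBoundedC g (fun _ => 0) n

/-- Last-arc-bounded (zero schedule). -/
def LastArcBounded (g : ℕ → ℝ) (n : ℕ) : Prop := LastArcBoundedC g (fun _ => 0) n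

/-- Arc-bounded: first- or last-arc-bounded. -/
def ArcBounded (g : ℕ → ℝ) (n : ℕ) : Prop := FirstArcBounded g n ∨ LastArcBounded g n

/-- A funnel: arc-bounded and containing no monotone subpath of 2 or 3 consecutive arcs. -/
def Funnel (B : ℝ) (g : ℕ → ℝ) (n : ℕ) : Prop :=
  ArcBounded g n ∧ ∀ a m, (m = 2 ∨ m = 3) → a + m ≤ n → ¬ MonotonePath B (SubPath g a) m

/-- `j = s̄(i)`: the maximal index `j ≥ i` (among arcs of a path with `n` arcs) such that
the subpath of arcs `i,…,j` is first-arc-bounded. -/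
def IsSbar (g : ℕ → ℝ) (n i j : ℕ) : Prop :=
  i ≤ j ∧ j < n ∧ FirstArcBounded (SubPath g i) (j - i + 1) ∧
    ∀ j', i ≤ j' → j' < n → FirstArcBounded (SubPath g i) (j' - i + 1) → j' ≤ j

/-- `j = s̲(i)`: the minimal index `j ≤ i` such that the subpath of arcs `j,…,i`
is last-arc-bounded. -/
def IsSlow (g : ℕ → ℝ) (n i j : ℕ) : Prop :=
  j ≤ i ∧ i < n ∧ LastArcBounded (SubPath g j) (i - j + 1) ∧
    ∀ j', j' ≤ i → LastArcBounded (SubPath g j') (i - j' + 1) → j ≤ j'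

/-- Arc gains of the walk around a cycle with `m` arc gains `g`, starting at vertex `a`. -/
def cyc (g : ℕ → ℝ) (m a : ℕ) : ℕ → ℝ := fun t => g ((a + t) % m)

/-- A walk of length `ℓ` from `x` to `y` in the directed graph with arc relation `A`. -/
def IsWalk {V : Type*} (A : V → V → Prop) (w : ℕ → V) (ℓ : ℕ) (x y : V) : Prop :=
  w 0 = x ∧ w ℓ = y ∧ ∀ t < ℓ, A (w t) (w (t + 1))

/-- The sequence of arc gains induced by a walk `w` in a graph with gain function `g`. -/
def walkGains {V : Type*} (g : V → V → ℝ) (w : ℕ → V) : ℕ → ℝ :=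
  fun t => g (w t) (w (t + 1))

namespace FunnelAux

variable {B : ℝ} {g : ℕ → ℝ} {n : ℕ}

lemma vGain_succ (g : ℕ → ℝ) (i : ℕ) : vGain g (i+1) = vGain g i + g i :=
  Finset.sum_range_succ g i

lemma cGain_zero (g : ℕ → ℝ) (i : ℕ) : cGain g (fun _ => 0) i = vGain g i := by
  simp [cGain]

lemma vGain_zero (g : ℕ → ℝ) : vGain g 0 = 0 := by simp [vGain]

lemma vGain_one (g : ℕ → ℝ) : vGain g 1 = g 0 := by simp [vGain]

lemma mono2_asc (hB : 0 < B) (h : ℕ → ℝ) (h0 : 0 ≤ h 0) (h1 : 0 ≤ h 1) :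
    MonotonePath B h 2 := by
  have c0 : charge B B h 0 = B := rfl
  have c1 : charge B B h 1 = min (B + h 0) B := rfl
  refine Or.inl ⟨?_, ?_⟩
  · intro i hi
    have e1 : min (B + h 0) B = B := min_eq_right (by linarith)
    interval_cases i
    · rw [c0]; linarith
    · rw [c1, e1]; linarith
  · intro i hi
    interval_cases i <;> simp [cGain_zero, vGain, Finset.sum_range_succ] <;>
      (try constructor) <;> linarith

lemma mono2_desc (hB : 0 < B) (h : ℕ → ℝ) (h0 : h 0 ≤ 0) (h1 : h 1 ≤ 0)
    (hs : -B ≤ h 0 + h 1) : MonotonePath B h 2 := by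
  have c0 : charge B B h 0 = B := rfl
  have c1 : charge B B h 1 = min (B + h 0) B := rfl
  refine Or.inr ⟨?_, ?_⟩
  · intro i hi
    have e1 : min (B + h 0) B = B + h 0 := min_eq_left (by linarith)
    interval_cases i
    · rw [c0]; linarith
    · rw [c1, e1]; linarith
  · intro i hi
    interval_cases i <;> simp [cGain_zero, vGain, Finset.sum_range_succ] <;>
      (try constructor) <;> linarith

lemma mono3_asc (hB : 0 < B) (h : ℕ → ℝ) (h0 : 0 ≤ h 0) (h01 : 0 ≤ h 0 + h 1)
    (h12 : 0 ≤ h 1 + h 2) (h2 : 0 ≤ h 2) (hlo : -B ≤ h 1) : MonotonePath B h 3 := by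
  have c0 : charge B B h 0 = B := rfl
  have c1 : charge B B h 1 = min (B + h 0) B := rfl
  have e1 : min (B + h 0) B = B := min_eq_right (by linarith)
  have c2 : charge B B h 2 = min (min (B + h 0) B + h 1) B := rfl
  refine Or.inl ⟨?_, ?_⟩
  · intro i hi
    interval_cases i
    · rw [c0]; linarith
    · rw [c1, e1]; linarith
    · rw [c2, e1]
      rcases le_total (h 1) 0 with hc | hc
      · have e2 : min (B + h 1) B = B + h 1 := min_eq_left (by linarith)
        rw [e2]; linarith
      · have e2 : min (B + h 1) B = B := min_eq_right (by linarith)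
        rw [e2]; linarith
  · intro i hi
    interval_cases i <;> simp [cGain_zero, vGain, Finset.sum_range_succ] <;>
      (try constructor) <;> linarith

lemma mono3_desc (hB : 0 < B) (h : ℕ → ℝ) (h0 : h 0 ≤ 0) (h01 : h 0 + h 1 ≤ 0)
    (h12 : h 1 + h 2 ≤ 0) (h2 : h 2 ≤ 0) (hlo : -B ≤ h 0) (hlo1 : -B ≤ h 0 + h 1)
    (hlo2 : -B ≤ h 0 + h 1 + h 2) : MonotonePath B h 3 := by
  have c0 : charge B B h 0 = B := rfl
  have c1 : charge B B h 1 = min (B + h 0) B := rfl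
  have e1 : min (B + h 0) B = B + h 0 := min_eq_left (by linarith)
  have c2 : charge B B h 2 = min (min (B + h 0) B + h 1) B := rfl
  have e2 : min (B + h 0 + h 1) B = B + h 0 + h 1 := min_eq_left (by linarith)
  refine Or.inr ⟨?_, ?_⟩
  · intro i hi
    interval_cases i
    · rw [c0]; linarith
    · rw [c1, e1]; linarith
    · rw [c2, e1, e2]; linarith
  · intro i hi
    interval_cases i <;> simp [cGain_zero, vGain, Finset.sum_range_succ] <;>
      (try constructor) <;> linarith

structure Good (B : ℝ) (g : ℕ → ℝ) (n : ℕ) : Prop where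
  hB : 0 < B
  lo : ∀ i, i < n → -B ≤ g i
  hi : ∀ i, i < n → g i ≤ B
  P1 : ∀ t, t + 2 ≤ n → 0 ≤ g t → g (t+1) < 0
  P2 : ∀ t, t + 2 ≤ n → g t ≤ 0 → g (t+1) ≤ 0 → g t + g (t+1) < -B
  T1 : ∀ t, t + 3 ≤ n → 0 ≤ g t → 0 ≤ g t + g (t+1) →
      0 ≤ g (t+1) + g (t+2) → 0 ≤ g (t+2) → False
  T2 : ∀ t, t + 3 ≤ n → g t ≤ 0 → g t + g (t+1) ≤ 0 → g (t+1) + g (t+2) ≤ 0 →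
      g (t+2) ≤ 0 → -B ≤ g t + g (t+1) → -B ≤ g t + g (t+1) + g (t+2) → False

lemma subPath_apply (g : ℕ → ℝ) (a t : ℕ) : SubPath g a t = g (a + t) := rfl

lemma subPath_subPath (g : ℕ → ℝ) (a b : ℕ) :
    SubPath (SubPath g a) b = SubPath g (a + b) := by
  funext t; simp [SubPath, add_assoc]

lemma good_of_funnel (hB : 0 < B) (hrange : ∀ i < n, |g i| ≤ B)
    (hF : Funnel B g n) : Good B g n := by
  have hlo : ∀ i, i < n → -B ≤ g i := fun i hi => (abs_le.1 (hrange i hi)).1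
  have hhi : ∀ i, i < n → g i ≤ B := fun i hi => (abs_le.1 (hrange i hi)).2
  have hM := hF.2
  refine ⟨hB, hlo, hhi, ?_, ?_, ?_, ?_⟩
  · intro t ht h0
    by_contra hc
    push_neg at hc
    exact hM t 2 (Or.inl rfl) ht (mono2_asc hB (SubPath g t) h0 hc)
  · intro t ht h0 h1
    by_contra hc
    push_neg at hc
    exact hM t 2 (Or.inl rfl) ht (mono2_desc hB (SubPath g t) h0 h1 hc)
  · intro t ht h0 h01 h12 h2
    exact hM t 3 (Or.inr rfl) ht
      (mono3_asc hB (SubPath g t) h0 h01 h12 h2 (hlo (t+1) (by omega)))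
  · intro t ht h0 h01 h12 h2 hb1 hb2
    exact hM t 3 (Or.inr rfl) ht
      (mono3_desc hB (SubPath g t) h0 h01 h12 h2 (hlo t (by omega)) hb1 hb2)

lemma Good.ne1 (hg : Good B g n) {t : ℕ} (ht : t + 2 ≤ n) : g t ≠ 0 := by
  intro h0
  have h1 := hg.P1 t ht (le_of_eq h0.symm)
  have h2 := hg.P2 t ht (le_of_eq h0) h1.le
  have := hg.lo (t+1) (by omega)
  rw [h0] at h2
  linarith

lemma Good.ne2 (hg : Good B g n) {t : ℕ} (ht : t + 2 ≤ n) : g (t+1) ≠ 0 := by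
  intro h0
  rcases lt_trichotomy (g t) 0 with h | h | h
  · have h2 := hg.P2 t ht h.le h0.le
    have h3 := hg.lo t (by omega)
    rw [h0] at h2
    linarith
  · exact hg.ne1 ht h
  · have := hg.P1 t ht h.le
    rw [h0] at this
    exact lt_irrefl 0 this

/-- Sign flips for consecutive arcs inside a window of width ≤ B. -/
lemma Good.flipSign (hg : Good B g n) {u v : ℕ} {lov upv : ℝ} (hv : v ≤ n)
    (hwidth : upv - lov ≤ B)
    (hw : ∀ i, u ≤ i → i ≤ v → lov ≤ vGain g i ∧ vGain g i ≤ upv)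
    (t : ℕ) (hut : u ≤ t) (htv : t + 2 ≤ v) :
    (0 < g t → g (t+1) < 0) ∧ (g t < 0 → 0 < g (t+1)) ∧
    (0 < g (t+1) → g t < 0) ∧ (g (t+1) < 0 → 0 < g t) := by
  have h2n : t + 2 ≤ n := le_trans htv hv
  have hns : ¬ (g t + g (t+1) < -B) := by
    intro hsteep
    have e2 : vGain g (t+2) = vGain g t + g t + g (t+1) := by
      rw [vGain_succ, vGain_succ]
    have b1 := (hw (t+2) (by omega) htv).1
    have b2 := (hw t hut (by omega)).2
    linarith
  have hpn : 0 < g t → g (t+1) < 0 := fun h => hg.P1 t h2n h.le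
  have hnp : g t < 0 → 0 < g (t+1) := by
    intro h
    by_contra hc
    push_neg at hc
    exact hns (hg.P2 t h2n h.le hc)
  refine ⟨hpn, hnp, ?_, ?_⟩
  · intro h
    rcases lt_trichotomy (g t) 0 with h' | h' | h'
    · exact h'
    · exact absurd h' (hg.ne1 h2n)
    · exact absurd (hpn h') (by linarith)
  · intro h
    rcases lt_trichotomy (g t) 0 with h' | h' | h'
    · exact absurd (hnp h') (by linarith)
    · exact absurd h' (hg.ne1 h2n)
    · exact h'

/-- Left-anchored sign alternation in a window of width ≤ B. -/
lemma Good.altL (hg : Good B g n) {u v : ℕ} {lov upv : ℝ} (hv : v ≤ n)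
    (hwidth : upv - lov ≤ B)
    (hw : ∀ i, u ≤ i → i ≤ v → lov ≤ vGain g i ∧ vGain g i ≤ upv) :
    ∀ k, u + k + 1 ≤ v →
      (0 < g u → ((k % 2 = 0 → 0 < g (u+k)) ∧ (k % 2 = 1 → g (u+k) < 0))) ∧
      (g u < 0 → ((k % 2 = 0 → g (u+k) < 0) ∧ (k % 2 = 1 → 0 < g (u+k)))) := by
  intro k
  induction k with
  | zero =>
    intro _
    exact ⟨fun h => ⟨fun _ => h, fun h1 => by omega⟩,
           fun h => ⟨fun _ => h, fun h1 => by omega⟩⟩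
  | succ k IH =>
    intro hb
    have IH' := IH (by omega)
    have hf := hg.flipSign hv hwidth hw (u+k) (by omega) (by omega)
    have e : u + (k+1) = (u+k) + 1 := by omega
    rw [e]
    rcases Nat.even_or_odd k with hk | hk
    · have hk0 : k % 2 = 0 := Nat.even_iff.1 hk
      refine ⟨fun h => ⟨fun h' => by omega, fun _ => hf.1 ((IH'.1 h).1 hk0)⟩,
              fun h => ⟨fun h' => by omega, fun _ => hf.2.1 ((IH'.2 h).1 hk0)⟩⟩
    · have hk1 : k % 2 = 1 := Nat.odd_iff.1 hk
      refine ⟨fun h => ⟨fun _ => hf.2.1 ((IH'.1 h).2 hk1), fun h' => by omega⟩,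
              fun h => ⟨fun _ => hf.1 ((IH'.2 h).2 hk1), fun h' => by omega⟩⟩

/-- Right-anchored sign alternation in a window of width ≤ B. -/
lemma Good.altR (hg : Good B g n) {u v : ℕ} {lov upv : ℝ} (hv : v ≤ n)
    (hwidth : upv - lov ≤ B)
    (hw : ∀ i, u ≤ i → i ≤ v → lov ≤ vGain g i ∧ vGain g i ≤ upv)
    {w : ℕ} (hwv : w + 1 = v) :
    ∀ k t, t + k = w → u ≤ t →
      (0 < g w → ((k % 2 = 0 → 0 < g t) ∧ (k % 2 = 1 → g t < 0))) ∧
      (g w < 0 → ((k % 2 = 0 → g t < 0) ∧ (k % 2 = 1 → 0 < g t))) := by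
  intro k
  induction k with
  | zero =>
    intro t ht _
    have : t = w := by omega
    subst this
    exact ⟨fun h => ⟨fun _ => h, fun h1 => by omega⟩,
           fun h => ⟨fun _ => h, fun h1 => by omega⟩⟩
  | succ k IH =>
    intro t ht hut
    have IH' := IH (t+1) (by omega) (by omega)
    have hf := hg.flipSign hv hwidth hw t hut (by omega)
    rcases Nat.even_or_odd k with hk | hk
    · have hk0 : k % 2 = 0 := Nat.even_iff.1 hk
      refine ⟨fun h => ⟨fun h' => by omega, fun _ => hf.2.2.1 ((IH'.1 h).1 hk0)⟩,
              fun h => ⟨fun h' => by omega, fun _ => hf.2.2.2 ((IH'.2 h).1 hk0)⟩⟩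
    · have hk1 : k % 2 = 1 := Nat.odd_iff.1 hk
      refine ⟨fun h => ⟨fun _ => hf.2.2.2 ((IH'.1 h).2 hk1), fun h' => by omega⟩,
              fun h => ⟨fun _ => hf.2.2.1 ((IH'.2 h).2 hk1), fun h' => by omega⟩⟩
/-- Core lemma for first-arc-bounded windows with positive first arc:
all values from `u+1` on stay above `S (u+2)`. -/
lemma Good.coreFBp (hg : Good B g n) {u v : ℕ} (hv : v ≤ n) (hx : 0 < g u)
    (hw : ∀ i, u ≤ i → i ≤ v → vGain g u ≤ vGain g i ∧ vGain g i ≤ vGain g (u+1)) :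
    ∀ j, u + 2 ≤ j → j ≤ v → vGain g (u+2) ≤ vGain g j := by
  intro j
  induction j using Nat.strong_induction_on with
  | _ j IH =>
  intro h2 hjv
  have hun : u + 2 ≤ n := le_trans (le_trans h2 hjv) hv
  have hguB : g u ≤ B := hg.hi u (by omega)
  have eU : vGain g (u+1) = vGain g u + g u := vGain_succ g u
  have hwidth : vGain g (u+1) - vGain g u ≤ B := by linarith
  have alt := hg.altL hv hwidth hw
  by_contra hlt
  push_neg at hlt
  have hj3 : u + 3 ≤ j := by
    by_contra hc
    push_neg at hc
    have : j = u + 2 := by omega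
    rw [this] at hlt
    exact lt_irrefl _ hlt
  obtain ⟨l0, rfl⟩ : ∃ l0, j = u + l0 + 2 := ⟨j - u - 2, by omega⟩
  have hl01 : 1 ≤ l0 := by omega
  have hSprev : vGain g (u+2) ≤ vGain g (u + l0 + 1) :=
    IH (u + l0 + 1) (by omega) (by omega) (by omega)
  have eJ : vGain g (u + l0 + 2) = vGain g (u + l0 + 1) + g (u + l0 + 1) := by
    rw [show u + l0 + 2 = (u + l0 + 1) + 1 from by omega, vGain_succ]
  have hglast : g (u + l0 + 1) < 0 := by linarith
  have hpar : (l0 + 1) % 2 = 1 := by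
    by_contra hc
    have hk0 : (l0 + 1) % 2 = 0 := by omega
    have hp := ((alt (l0 + 1) (by omega)).1 hx).1 hk0
    rw [show u + (l0 + 1) = u + l0 + 1 from by omega] at hp
    linarith
  have hl0even : l0 % 2 = 0 := by omega
  have hl02 : 2 ≤ l0 := by omega
  have chain : ∀ l, 1 ≤ l → l ≤ l0 →
      (l % 2 = 1 → g (u+l) + g (u+l+1) < 0) ∧
      (l % 2 = 0 → 0 < g (u+l) + g (u+l+1)) := by
    intro l
    induction l with
    | zero => intro h1 _; exact absurd h1 (by omega)
    | succ l IHl =>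
      intro _ hll0
      rw [show u + (l+1) = u + l + 1 from by omega,
          show u + l + 1 + 1 = u + l + 2 from by omega]
      rcases Nat.eq_zero_or_pos l with rfl | hl1
      · refine ⟨fun _ => ?_, fun hp => absurd hp (by omega)⟩
        rw [show u + 0 + 1 = u + 1 from by omega, show u + 0 + 2 = u + 2 from by omega]
        by_contra hcon
        push_neg at hcon
        have e1 : vGain g (u+2) = vGain g u + g u + g (u+1) := by
          rw [show u + 2 = (u+1) + 1 from by omega, vGain_succ, vGain_succ]
        have hb := (hw (u+2) (by omega) (by omega)).1
        have hg2 : 0 < g (u+2) := ((alt 2 (by omega)).1 hx).1 (by omega)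
        exact hg.T1 u (by omega) hx.le (by linarith) hcon hg2.le
      · have IH' := IHl hl1 (by omega)
        rcases Nat.even_or_odd l with he | ho
        · have hl0' : l % 2 = 0 := Nat.even_iff.1 he
          refine ⟨fun _ => ?_, fun hp => absurd hp (by omega)⟩
          have hd := IH'.2 hl0'
          have hgt : 0 < g (u+l) := ((alt l (by omega)).1 hx).1 hl0'
          have hgt2 : 0 < g (u+l+2) := by
            have hp := ((alt (l+2) (by omega)).1 hx).1 (by omega)
            rw [show u + (l+2) = u + l + 2 from by omega] at hp
            exact hp
          by_contra hcon
          push_neg at hcon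
          exact hg.T1 (u+l) (by omega) hgt.le hd.le hcon hgt2.le
        · have hl1' : l % 2 = 1 := Nat.odd_iff.1 ho
          refine ⟨fun hp => absurd hp (by omega), fun _ => ?_⟩
          have hd := IH'.1 hl1'
          have hgt : g (u+l) < 0 := ((alt l (by omega)).1 hx).2 hl1'
          have hgt2 : g (u+l+2) < 0 := by
            have hp := ((alt (l+2) (by omega)).1 hx).2 (by omega)
            rw [show u + (l+2) = u + l + 2 from by omega] at hp
            exact hp
          by_contra hcon
          push_neg at hcon
          have eS2 : vGain g (u+l+2) = vGain g (u+l) + g (u+l) + g (u+l+1) := by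
            rw [show u + l + 2 = (u+l+1) + 1 from by omega, vGain_succ, vGain_succ]
          have eS3 : vGain g (u+l+3) = vGain g (u+l+2) + g (u+l+2) := by
            rw [show u + l + 3 = (u+l+2) + 1 from by omega, vGain_succ]
          have b1 := (hw (u+l) (by omega) (by omega)).2
          have b2 := (hw (u+l+2) (by omega) (by omega)).1
          have b3 := (hw (u+l+3) (by omega) (by omega)).1
          exact hg.T2 (u+l) (by omega) hgt.le hd.le hcon hgt2.le
            (by linarith) (by linarith)
  have hc := (chain l0 (by omega) le_rfl).2 hl0even
  have hmid : vGain g (u+2) ≤ vGain g (u+l0) := IH (u + l0) (by omega) (by omega) (by omega)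
  have eS2 : vGain g (u+l0+2) = vGain g (u+l0) + g (u+l0) + g (u+l0+1) := by
    rw [show u + l0 + 2 = (u+l0+1) + 1 from by omega, vGain_succ, vGain_succ]
  linarith
/-- Mirror of `coreFBp` for a negative first arc. -/
lemma Good.coreFBm (hg : Good B g n) {u v : ℕ} (hv : v ≤ n) (hx : g u < 0)
    (hw : ∀ i, u ≤ i → i ≤ v → vGain g (u+1) ≤ vGain g i ∧ vGain g i ≤ vGain g u) :
    ∀ j, u + 2 ≤ j → j ≤ v → vGain g j ≤ vGain g (u+2) := by
  intro j
  induction j using Nat.strong_induction_on with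
  | _ j IH =>
  intro h2 hjv
  have hun : u + 2 ≤ n := le_trans (le_trans h2 hjv) hv
  have hguB : -B ≤ g u := hg.lo u (by omega)
  have eU : vGain g (u+1) = vGain g u + g u := vGain_succ g u
  have hwidth : vGain g u - vGain g (u+1) ≤ B := by linarith
  have alt := hg.altL hv hwidth hw
  by_contra hlt
  push_neg at hlt
  have hj3 : u + 3 ≤ j := by
    by_contra hc
    push_neg at hc
    have : j = u + 2 := by omega
    rw [this] at hlt
    exact lt_irrefl _ hlt
  obtain ⟨l0, rfl⟩ : ∃ l0, j = u + l0 + 2 := ⟨j - u - 2, by omega⟩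
  have hl01 : 1 ≤ l0 := by omega
  have hSprev : vGain g (u + l0 + 1) ≤ vGain g (u+2) :=
    IH (u + l0 + 1) (by omega) (by omega) (by omega)
  have eJ : vGain g (u + l0 + 2) = vGain g (u + l0 + 1) + g (u + l0 + 1) := by
    rw [show u + l0 + 2 = (u + l0 + 1) + 1 from by omega, vGain_succ]
  have hglast : 0 < g (u + l0 + 1) := by linarith
  have hpar : (l0 + 1) % 2 = 1 := by
    by_contra hc
    have hk0 : (l0 + 1) % 2 = 0 := by omega
    have hp := ((alt (l0 + 1) (by omega)).2 hx).1 hk0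
    rw [show u + (l0 + 1) = u + l0 + 1 from by omega] at hp
    linarith
  have hl0even : l0 % 2 = 0 := by omega
  have hl02 : 2 ≤ l0 := by omega
  have chain : ∀ l, 1 ≤ l → l ≤ l0 →
      (l % 2 = 1 → 0 < g (u+l) + g (u+l+1)) ∧
      (l % 2 = 0 → g (u+l) + g (u+l+1) < 0) := by
    intro l
    induction l with
    | zero => intro h1 _; exact absurd h1 (by omega)
    | succ l IHl =>
      intro _ hll0
      rw [show u + (l+1) = u + l + 1 from by omega,
          show u + l + 1 + 1 = u + l + 2 from by omega]
      rcases Nat.eq_zero_or_pos l with rfl | hl1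
      · refine ⟨fun _ => ?_, fun hp => absurd hp (by omega)⟩
        rw [show u + 0 + 1 = u + 1 from by omega, show u + 0 + 2 = u + 2 from by omega]
        by_contra hcon
        push_neg at hcon
        have e1 : vGain g (u+2) = vGain g u + g u + g (u+1) := by
          rw [show u + 2 = (u+1) + 1 from by omega, vGain_succ, vGain_succ]
        have e3 : vGain g (u+3) = vGain g (u+2) + g (u+2) := by
          rw [show u + 3 = (u+2) + 1 from by omega, vGain_succ]
        have hb := (hw (u+2) (by omega) (by omega)).2
        have hb2 := (hw (u+2) (by omega) (by omega)).1
        have hb3 := (hw (u+3) (by omega) (by omega)).1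
        have hg2 : g (u+2) < 0 := ((alt 2 (by omega)).2 hx).1 (by omega)
        exact hg.T2 u (by omega) hx.le (by linarith) hcon hg2.le
          (by linarith) (by linarith)
      · have IH' := IHl hl1 (by omega)
        rcases Nat.even_or_odd l with he | ho
        · have hl0' : l % 2 = 0 := Nat.even_iff.1 he
          refine ⟨fun _ => ?_, fun hp => absurd hp (by omega)⟩
          have hd := IH'.2 hl0'
          have hgt : g (u+l) < 0 := ((alt l (by omega)).2 hx).1 hl0'
          have hgt2 : g (u+l+2) < 0 := by
            have hp := ((alt (l+2) (by omega)).2 hx).1 (by omega)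
            rw [show u + (l+2) = u + l + 2 from by omega] at hp
            exact hp
          by_contra hcon
          push_neg at hcon
          have eS2 : vGain g (u+l+2) = vGain g (u+l) + g (u+l) + g (u+l+1) := by
            rw [show u + l + 2 = (u+l+1) + 1 from by omega, vGain_succ, vGain_succ]
          have eS3 : vGain g (u+l+3) = vGain g (u+l+2) + g (u+l+2) := by
            rw [show u + l + 3 = (u+l+2) + 1 from by omega, vGain_succ]
          have b1 := (hw (u+l) (by omega) (by omega)).2
          have b2' := (hw (u+l+2) (by omega) (by omega)).1
          have b3 := (hw (u+l+3) (by omega) (by omega)).1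
          exact hg.T2 (u+l) (by omega) hgt.le hd.le hcon hgt2.le
            (by linarith) (by linarith)
        · have hl1' : l % 2 = 1 := Nat.odd_iff.1 ho
          refine ⟨fun hp => absurd hp (by omega), fun _ => ?_⟩
          have hd := IH'.1 hl1'
          have hgt : 0 < g (u+l) := ((alt l (by omega)).2 hx).2 hl1'
          have hgt2 : 0 < g (u+l+2) := by
            have hp := ((alt (l+2) (by omega)).2 hx).2 (by omega)
            rw [show u + (l+2) = u + l + 2 from by omega] at hp
            exact hp
          by_contra hcon
          push_neg at hcon
          exact hg.T1 (u+l) (by omega) hgt.le hd.le hcon hgt2.le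
  have hc := (chain l0 (by omega) le_rfl).2 hl0even
  have hmid : vGain g (u+l0) ≤ vGain g (u+2) := IH (u + l0) (by omega) (by omega) (by omega)
  have eS2 : vGain g (u+l0+2) = vGain g (u+l0) + g (u+l0) + g (u+l0+1) := by
    rw [show u + l0 + 2 = (u+l0+1) + 1 from by omega, vGain_succ, vGain_succ]
  linarith
/-- Core lemma for last-arc-bounded windows with positive last arc:
all values up to `p+1` stay below `S p` (window is `[u, p+2]`). -/
lemma Good.coreLBp (hg : Good B g n) {u p : ℕ} (hv : p + 2 ≤ n) (hup : u ≤ p)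
    (hz : 0 < g (p+1))
    (hw : ∀ i, u ≤ i → i ≤ p + 2 → vGain g (p+1) ≤ vGain g i ∧ vGain g i ≤ vGain g (p+2)) :
    ∀ j, u ≤ j → j ≤ p + 1 → vGain g j ≤ vGain g p := by
  have hgzB : g (p+1) ≤ B := hg.hi (p+1) (by omega)
  have eV : vGain g (p+2) = vGain g (p+1) + g (p+1) := by
    rw [show p + 2 = (p+1) + 1 from by omega, vGain_succ]
  have hwidth : vGain g (p+2) - vGain g (p+1) ≤ B := by linarith
  have alt := hg.altR hv hwidth hw (w := p+1) (by omega)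
  have eP : vGain g (p+1) = vGain g p + g p := vGain_succ g p
  suffices H : ∀ k j, j + k = p + 1 → u ≤ j → vGain g j ≤ vGain g p by
    intro j hu hj
    exact H (p + 1 - j) j (by omega) hu
  intro k
  induction k using Nat.strong_induction_on with
  | _ k IH =>
  intro j hjk hu
  rcases Nat.eq_zero_or_pos k with rfl | hk0
  · have hj : j = p + 1 := by omega
    subst hj
    have hgp : g p < 0 := ((alt 1 p (by omega) hup).1 hz).2 (by omega)
    linarith
  rcases Nat.eq_or_lt_of_le hk0 with hk1 | hk2
  · have hj : j = p := by omega
    subst hj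
    exact le_rfl
  have hk2' : 2 ≤ k := hk2
  by_contra hlt
  push_neg at hlt
  have hS1 : vGain g (j+1) ≤ vGain g p := IH (k-1) (by omega) (j+1) (by omega) (by omega)
  have eJ : vGain g (j+1) = vGain g j + g j := vGain_succ g j
  have hgj : g j < 0 := by linarith
  have hpar : k % 2 = 1 := by
    by_contra hc
    have := ((alt k j hjk hu).1 hz).1 (by omega)
    linarith
  have hk3 : 3 ≤ k := by omega
  have hS2 : vGain g (j+2) ≤ vGain g p := IH (k-2) (by omega) (j+2) (by omega) (by omega)
  have eJ2 : vGain g (j+2) = vGain g j + g j + g (j+1) := by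
    rw [show j + 2 = (j+1) + 1 from by omega, vGain_succ, vGain_succ]
  have hdj : g j + g (j+1) < 0 := by linarith
  have chain : ∀ l, 1 ≤ l → j + l ≤ p →
      (l % 2 = 1 → 0 < g (j+l) + g (j+l+1)) ∧
      (l % 2 = 0 → g (j+l) + g (j+l+1) < 0) := by
    intro l
    induction l with
    | zero => intro h1 _; exact absurd h1 (by omega)
    | succ l IHl =>
      intro _ hlp
      rw [show j + (l+1) = j + l + 1 from by omega,
          show j + l + 1 + 1 = j + l + 2 from by omega]
      rcases Nat.eq_zero_or_pos l with rfl | hl1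
      · refine ⟨fun _ => ?_, fun hp => absurd hp (by omega)⟩
        rw [show j + 0 + 1 = j + 1 from by omega, show j + 0 + 2 = j + 2 from by omega]
        by_contra hcon
        push_neg at hcon
        have eJ3 : vGain g (j+3) = vGain g (j+2) + g (j+2) := by
          rw [show j + 3 = (j+2) + 1 from by omega, vGain_succ]
        have hg2 : g (j+2) < 0 := by
          have hp := ((alt (k-2) (j+2) (by omega) (by omega)).1 hz).2 (by omega)
          exact hp
        have b0 := (hw j hu (by omega)).2
        have b2 := (hw (j+2) (by omega) (by omega)).1
        have b3 := (hw (j+3) (by omega) (by omega)).1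
        exact hg.T2 j (by omega) hgj.le hdj.le hcon hg2.le
          (by linarith) (by linarith)
      · have IH' := IHl hl1 (by omega)
        rcases Nat.even_or_odd l with he | ho
        · -- l even ≥ 2 : d (j+l) < 0, arc at j+l negative, T2 gives next positive
          have hl0' : l % 2 = 0 := Nat.even_iff.1 he
          refine ⟨fun _ => ?_, fun hp => absurd hp (by omega)⟩
          have hd := IH'.2 hl0'
          have hgt : g (j+l) < 0 := ((alt (k-l) (j+l) (by omega) (by omega)).1 hz).2 (by omega)
          have hgt2 : g (j+l+2) < 0 :=
            ((alt (k-l-2) (j+l+2) (by omega) (by omega)).1 hz).2 (by omega)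
          by_contra hcon
          push_neg at hcon
          have eS2 : vGain g (j+l+2) = vGain g (j+l) + g (j+l) + g (j+l+1) := by
            rw [show j + l + 2 = (j+l+1) + 1 from by omega, vGain_succ, vGain_succ]
          have eS3 : vGain g (j+l+3) = vGain g (j+l+2) + g (j+l+2) := by
            rw [show j + l + 3 = (j+l+2) + 1 from by omega, vGain_succ]
          have b1 := (hw (j+l) (by omega) (by omega)).2
          have b2 := (hw (j+l+2) (by omega) (by omega)).1
          have b3 := (hw (j+l+3) (by omega) (by omega)).1
          exact hg.T2 (j+l) (by omega) hgt.le hd.le hcon hgt2.le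
            (by linarith) (by linarith)
        · -- l odd : d (j+l) > 0, arc at j+l positive, T1 gives next negative
          have hl1' : l % 2 = 1 := Nat.odd_iff.1 ho
          refine ⟨fun hp => absurd hp (by omega), fun _ => ?_⟩
          have hd := IH'.1 hl1'
          have hgt : 0 < g (j+l) := ((alt (k-l) (j+l) (by omega) (by omega)).1 hz).1 (by omega)
          have hgt2 : 0 < g (j+l+2) :=
            ((alt (k-l-2) (j+l+2) (by omega) (by omega)).1 hz).1 (by omega)
          by_contra hcon
          push_neg at hcon
          exact hg.T1 (j+l) (by omega) hgt.le hd.le hcon hgt2.le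
  obtain ⟨l1, hl1⟩ : ∃ l1, p = j + l1 := ⟨p - j, by omega⟩
  have hl1even : l1 % 2 = 0 := by omega
  have hc := (chain l1 (by omega) (by omega)).2 hl1even
  rw [show j + l1 = p from hl1.symm] at hc
  have hb := (hw p (by omega) (by omega)).2
  linarith

/-- Mirror of `coreLBp` for a negative last arc. -/
lemma Good.coreLBm (hg : Good B g n) {u p : ℕ} (hv : p + 2 ≤ n) (hup : u ≤ p)
    (hz : g (p+1) < 0)
    (hw : ∀ i, u ≤ i → i ≤ p + 2 → vGain g (p+2) ≤ vGain g i ∧ vGain g i ≤ vGain g (p+1)) :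
    ∀ j, u ≤ j → j ≤ p + 1 → vGain g p ≤ vGain g j := by
  have hgzB : -B ≤ g (p+1) := hg.lo (p+1) (by omega)
  have eV : vGain g (p+2) = vGain g (p+1) + g (p+1) := by
    rw [show p + 2 = (p+1) + 1 from by omega, vGain_succ]
  have hwidth : vGain g (p+1) - vGain g (p+2) ≤ B := by linarith
  have alt := hg.altR hv hwidth hw (w := p+1) (by omega)
  have eP : vGain g (p+1) = vGain g p + g p := vGain_succ g p
  suffices H : ∀ k j, j + k = p + 1 → u ≤ j → vGain g p ≤ vGain g j by
    intro j hu hj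
    exact H (p + 1 - j) j (by omega) hu
  intro k
  induction k using Nat.strong_induction_on with
  | _ k IH =>
  intro j hjk hu
  rcases Nat.eq_zero_or_pos k with rfl | hk0
  · have hj : j = p + 1 := by omega
    subst hj
    have hgp : 0 < g p := ((alt 1 p (by omega) hup).2 hz).2 (by omega)
    linarith
  rcases Nat.eq_or_lt_of_le hk0 with hk1 | hk2
  · have hj : j = p := by omega
    subst hj
    exact le_rfl
  have hk2' : 2 ≤ k := hk2
  by_contra hlt
  push_neg at hlt
  have hS1 : vGain g p ≤ vGain g (j+1) := IH (k-1) (by omega) (j+1) (by omega) (by omega)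
  have eJ : vGain g (j+1) = vGain g j + g j := vGain_succ g j
  have hgj : 0 < g j := by linarith
  have hpar : k % 2 = 1 := by
    by_contra hc
    have := ((alt k j hjk hu).2 hz).1 (by omega)
    linarith
  have hk3 : 3 ≤ k := by omega
  have hS2 : vGain g p ≤ vGain g (j+2) := IH (k-2) (by omega) (j+2) (by omega) (by omega)
  have eJ2 : vGain g (j+2) = vGain g j + g j + g (j+1) := by
    rw [show j + 2 = (j+1) + 1 from by omega, vGain_succ, vGain_succ]
  have hdj : 0 < g j + g (j+1) := by linarith
  have chain : ∀ l, 1 ≤ l → j + l ≤ p →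
      (l % 2 = 1 → g (j+l) + g (j+l+1) < 0) ∧
      (l % 2 = 0 → 0 < g (j+l) + g (j+l+1)) := by
    intro l
    induction l with
    | zero => intro h1 _; exact absurd h1 (by omega)
    | succ l IHl =>
      intro _ hlp
      rw [show j + (l+1) = j + l + 1 from by omega,
          show j + l + 1 + 1 = j + l + 2 from by omega]
      rcases Nat.eq_zero_or_pos l with rfl | hl1
      · refine ⟨fun _ => ?_, fun hp => absurd hp (by omega)⟩
        rw [show j + 0 + 1 = j + 1 from by omega, show j + 0 + 2 = j + 2 from by omega]
        by_contra hcon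
        push_neg at hcon
        have hg2 : 0 < g (j+2) :=
          ((alt (k-2) (j+2) (by omega) (by omega)).2 hz).2 (by omega)
        exact hg.T1 j (by omega) hgj.le hdj.le hcon hg2.le
      · have IH' := IHl hl1 (by omega)
        rcases Nat.even_or_odd l with he | ho
        · -- l even ≥ 2 : d (j+l) > 0, arc at j+l positive, T1 gives next negative
          have hl0' : l % 2 = 0 := Nat.even_iff.1 he
          refine ⟨fun _ => ?_, fun hp => absurd hp (by omega)⟩
          have hd := IH'.2 hl0'
          have hgt : 0 < g (j+l) := ((alt (k-l) (j+l) (by omega) (by omega)).2 hz).2 (by omega)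
          have hgt2 : 0 < g (j+l+2) :=
            ((alt (k-l-2) (j+l+2) (by omega) (by omega)).2 hz).2 (by omega)
          by_contra hcon
          push_neg at hcon
          exact hg.T1 (j+l) (by omega) hgt.le hd.le hcon hgt2.le
        · -- l odd : d (j+l) < 0, arc at j+l negative, T2 gives next positive
          have hl1' : l % 2 = 1 := Nat.odd_iff.1 ho
          refine ⟨fun hp => absurd hp (by omega), fun _ => ?_⟩
          have hd := IH'.1 hl1'
          have hgt : g (j+l) < 0 := ((alt (k-l) (j+l) (by omega) (by omega)).2 hz).1 (by omega)
          have hgt2 : g (j+l+2) < 0 :=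
            ((alt (k-l-2) (j+l+2) (by omega) (by omega)).2 hz).1 (by omega)
          by_contra hcon
          push_neg at hcon
          have eS2 : vGain g (j+l+2) = vGain g (j+l) + g (j+l) + g (j+l+1) := by
            rw [show j + l + 2 = (j+l+1) + 1 from by omega, vGain_succ, vGain_succ]
          have eS3 : vGain g (j+l+3) = vGain g (j+l+2) + g (j+l+2) := by
            rw [show j + l + 3 = (j+l+2) + 1 from by omega, vGain_succ]
          have b1 := (hw (j+l) (by omega) (by omega)).2
          have b2 := (hw (j+l+2) (by omega) (by omega)).1
          have b3 := (hw (j+l+3) (by omega) (by omega)).1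
          exact hg.T2 (j+l) (by omega) hgt.le hd.le hcon hgt2.le
            (by linarith) (by linarith)
  obtain ⟨l1, hl1⟩ : ∃ l1, p = j + l1 := ⟨p - j, by omega⟩
  have hl1even : l1 % 2 = 0 := by omega
  have hc := (chain l1 (by omega) (by omega)).2 hl1even
  rw [show j + l1 = p from hl1.symm] at hc
  have hb := (hw p (by omega) (by omega)).1
  linarith
/-- A first-arc-bounded window `[u,v]` with strict first arc sign. -/
def FBW (g : ℕ → ℝ) (u v : ℕ) : Prop :=
  (0 < g u ∧ ∀ i, u ≤ i → i ≤ v → vGain g u ≤ vGain g i ∧ vGain g i ≤ vGain g (u+1)) ∨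
  (g u < 0 ∧ ∀ i, u ≤ i → i ≤ v → vGain g (u+1) ≤ vGain g i ∧ vGain g i ≤ vGain g u)

/-- A last-arc-bounded window `[u,p+1]` (last arc `g p`) with strict last arc sign. -/
def LBW (g : ℕ → ℝ) (u p : ℕ) : Prop :=
  (0 < g p ∧ ∀ i, u ≤ i → i ≤ p+1 → vGain g p ≤ vGain g i ∧ vGain g i ≤ vGain g (p+1)) ∨
  (g p < 0 ∧ ∀ i, u ≤ i → i ≤ p+1 → vGain g (p+1) ≤ vGain g i ∧ vGain g i ≤ vGain g p)

lemma Good.FBW_drop (hg : Good B g n) {u v : ℕ} (huv : u + 2 ≤ v) (hv : v ≤ n)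
    (h : FBW g u v) : FBW g (u+1) v := by
  rcases h with ⟨hx, hw⟩ | ⟨hx, hw⟩
  · have hguB : g u ≤ B := hg.hi u (by omega)
    have eU : vGain g (u+1) = vGain g u + g u := vGain_succ g u
    have hwidth : vGain g (u+1) - vGain g u ≤ B := by linarith
    have hneg : g (u+1) < 0 := ((hg.altL hv hwidth hw 1 (by omega)).1 hx).2 (by omega)
    refine Or.inr ⟨hneg, ?_⟩
    intro i h1 h2
    rw [show u + 1 + 1 = u + 2 from by omega]
    have e2 : vGain g (u+2) = vGain g (u+1) + g (u+1) := by
      rw [show u + 2 = (u+1) + 1 from by omega, vGain_succ]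
    refine ⟨?_, (hw i (by omega) h2).2⟩
    rcases Nat.eq_or_lt_of_le h1 with he | hlt
    · rw [← he]; linarith
    · exact hg.coreFBp hv hx hw i (by omega) h2
  · have hguB : -B ≤ g u := hg.lo u (by omega)
    have eU : vGain g (u+1) = vGain g u + g u := vGain_succ g u
    have hwidth : vGain g u - vGain g (u+1) ≤ B := by linarith
    have hpos : 0 < g (u+1) := ((hg.altL hv hwidth hw 1 (by omega)).2 hx).2 (by omega)
    refine Or.inl ⟨hpos, ?_⟩
    intro i h1 h2
    rw [show u + 1 + 1 = u + 2 from by omega]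
    have e2 : vGain g (u+2) = vGain g (u+1) + g (u+1) := by
      rw [show u + 2 = (u+1) + 1 from by omega, vGain_succ]
    refine ⟨(hw i (by omega) h2).1, ?_⟩
    rcases Nat.eq_or_lt_of_le h1 with he | hlt
    · rw [← he]; linarith
    · exact hg.coreFBm hv hx hw i (by omega) h2

lemma Good.LBW_drop (hg : Good B g n) {u p : ℕ} (hup : u ≤ p) (hv : p + 2 ≤ n)
    (h : LBW g u (p+1)) : LBW g u p := by
  rw [LBW, show p + 1 + 1 = p + 2 from by omega] at h
  rcases h with ⟨hz, hw⟩ | ⟨hz, hw⟩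
  · have hgzB : g (p+1) ≤ B := hg.hi (p+1) (by omega)
    have eV : vGain g (p+2) = vGain g (p+1) + g (p+1) := by
      rw [show p + 2 = (p+1) + 1 from by omega, vGain_succ]
    have hwidth : vGain g (p+2) - vGain g (p+1) ≤ B := by linarith
    have hgp : g p < 0 :=
      ((hg.altR hv hwidth hw (w := p+1) (by omega) 1 p (by omega) hup).1 hz).2 (by omega)
    refine Or.inr ⟨hgp, ?_⟩
    intro i h1 h2
    exact ⟨(hw i h1 (by omega)).1, hg.coreLBp hv hup hz hw i h1 h2⟩
  · have hgzB : -B ≤ g (p+1) := hg.lo (p+1) (by omega)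
    have eV : vGain g (p+2) = vGain g (p+1) + g (p+1) := by
      rw [show p + 2 = (p+1) + 1 from by omega, vGain_succ]
    have hwidth : vGain g (p+1) - vGain g (p+2) ≤ B := by linarith
    have hgp : 0 < g p :=
      ((hg.altR hv hwidth hw (w := p+1) (by omega) 1 p (by omega) hup).2 hz).2 (by omega)
    refine Or.inl ⟨hgp, ?_⟩
    intro i h1 h2
    exact ⟨hg.coreLBm hv hup hz hw i h1 h2, (hw i h1 (by omega)).2⟩

lemma Good.FBW_window (hg : Good B g n) (hFB : FBW g 0 n) :
    ∀ a b, a < b → b ≤ n → FBW g a b := by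
  have hsuf : ∀ a, a < n → FBW g a n := by
    intro a
    induction a with
    | zero => intro _; exact hFB
    | succ a IHa =>
      intro h
      exact hg.FBW_drop (by omega) le_rfl (IHa (by omega))
  intro a b hab hbn
  rcases hsuf a (by omega) with ⟨hx, hw⟩ | ⟨hx, hw⟩
  · exact Or.inl ⟨hx, fun i h1 h2 => hw i h1 (le_trans h2 hbn)⟩
  · exact Or.inr ⟨hx, fun i h1 h2 => hw i h1 (le_trans h2 hbn)⟩

lemma Good.LBW_window (hg : Good B g n) {q : ℕ} (hq : q + 2 = n) (hLB : LBW g 0 (q+1)) :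
    ∀ a p, a ≤ p → p + 1 ≤ n → LBW g a p := by
  intro a p hap hpn
  have hleft : LBW g a (q+1) := by
    rcases hLB with ⟨hx, hw⟩ | ⟨hx, hw⟩
    · exact Or.inl ⟨hx, fun i h1 h2 => hw i (by omega) h2⟩
    · exact Or.inr ⟨hx, fun i h1 h2 => hw i (by omega) h2⟩
  suffices H : ∀ k p', p' + k = q + 1 → a ≤ p' → LBW g a p' by
    exact H (q + 1 - p) p (by omega) hap
  intro k
  induction k with
  | zero =>
    intro p' e _
    have : p' = q + 1 := by omega
    subst this
    exact hleft
  | succ k IHk =>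
    intro p' e ha
    have h1 : LBW g a (p' + 1) := IHk (p' + 1) (by omega) (by omega)
    exact hg.LBW_drop ha (by omega) h1

lemma vGain_subPath (g : ℕ → ℝ) (a : ℕ) :
    ∀ i, vGain (SubPath g a) i = vGain g (a+i) - vGain g a := by
  intro i
  induction i with
  | zero => simp [vGain_zero]
  | succ i IH =>
    rw [vGain_succ, IH, subPath_apply, show a + (i+1) = (a+i) + 1 from by omega,
      vGain_succ]
    ring

lemma firstArc_of_FBW {a m : ℕ} (h : FBW g a (a+m)) :
    FirstArcBounded (SubPath g a) m := by
  refine ⟨rfl, ?_⟩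
  have e1 : vGain g (a+1) = vGain g a + g a := vGain_succ g a
  rcases h with ⟨hx, hw⟩ | ⟨hx, hw⟩
  · left
    refine ⟨?_, ?_⟩
    · show (0:ℝ) ≤ g (a + 0)
      rw [Nat.add_zero]
      exact hx.le
    · intro i hi
      rw [cGain_zero, vGain_subPath]
      have h1 := hw (a+i) (by omega) (by omega)
      constructor
      · linarith [h1.1]
      · show vGain g (a+i) - vGain g a ≤ g (a+0)
        rw [Nat.add_zero]
        linarith [h1.2]
  · right
    refine ⟨?_, ?_⟩
    · show g (a + 0) ≤ 0
      rw [Nat.add_zero]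
      exact hx.le
    · intro i hi
      rw [cGain_zero, vGain_subPath]
      have h1 := hw (a+i) (by omega) (by omega)
      constructor
      · show g (a+0) ≤ vGain g (a+i) - vGain g a
        rw [Nat.add_zero]
        linarith [h1.1]
      · linarith [h1.2]

lemma lastArc_of_LBW {a q : ℕ} (h : LBW g a (a+q)) :
    LastArcBounded (SubPath g a) (q+1) := by
  refine ⟨rfl, rfl, ?_⟩
  have e1 : vGain g (a+q+1) = vGain g (a+q) + g (a+q) := vGain_succ g (a+q)
  rcases h with ⟨hx, hw⟩ | ⟨hx, hw⟩
  · left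
    refine ⟨?_, ?_⟩
    · show (0:ℝ) ≤ g (a + (q + 1 - 1))
      rw [Nat.add_sub_cancel]
      exact hx.le
    · intro i hi
      rw [cGain_zero, cGain_zero, cGain_zero, vGain_subPath, vGain_subPath,
        vGain_subPath, Nat.add_sub_cancel, show a + (q+1) = a + q + 1 from by omega]
      have h1 := hw (a+i) (by omega) (by omega)
      have h2 := hw (a+q) (by omega) (by omega)
      constructor
      · linarith [h1.1]
      · linarith [h1.2]
  · right
    refine ⟨?_, ?_⟩
    · show g (a + (q + 1 - 1)) < 0
      rw [Nat.add_sub_cancel]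
      exact hx
    · intro i hi
      rw [cGain_zero, cGain_zero, cGain_zero, vGain_subPath, vGain_subPath,
        vGain_subPath, Nat.add_sub_cancel, show a + (q+1) = a + q + 1 from by omega]
      have h1 := hw (a+i) (by omega) (by omega)
      constructor
      · linarith [h1.1]
      · linarith [h1.2]
end FunnelAux

open FunnelAux

/-- Every (nonempty) contiguous subpath of a funnel whose arc gains lie in
`[-B,B]` is a funnel. -/
theorem funnel_subpath (B : ℝ) (hB : 0 < B) (g : ℕ → ℝ) (n : ℕ)
    (hrange : ∀ i < n, |g i| ≤ B) (hF : Funnel B g n) :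
    ∀ a m, 1 ≤ m → a + m ≤ n → Funnel B (SubPath g a) m := by
  intro a m hm ham
  have hMono : ∀ a' m', (m' = 2 ∨ m' = 3) → a' + m' ≤ m →
      ¬ MonotonePath B (SubPath (SubPath g a) a') m' := by
    intro a' m' hm' hle
    rw [subPath_subPath]
    exact hF.2 (a + a') m' hm' (by omega)
  refine ⟨?_, hMono⟩
  rcases Nat.lt_or_ge n 2 with hn | hn
  · have ha0 : a = 0 := by omega
    have hmn : m = n := by omega
    subst ha0
    subst hmn
    have e : SubPath g 0 = g := by funext t; simp [SubPath]
    rw [e]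
    exact hF.1
  · have hg : Good B g n := good_of_funnel hB hrange hF
    rcases hF.1 with hFB | hLB
    · rcases hFB.2 with ⟨h0, hbd⟩ | ⟨h0, hbd⟩
      · have hx : 0 < g 0 := lt_of_le_of_ne h0 (Ne.symm (hg.ne1 (t := 0) (by omega)))
        have hbounds : ∀ i, 0 ≤ i → i ≤ n →
            vGain g 0 ≤ vGain g i ∧ vGain g i ≤ vGain g (0+1) := by
          intro i _ h2
          have h3 := hbd i h2
          rw [cGain_zero] at h3
          constructor
          · rw [vGain_zero]; exact h3.1
          · have e : vGain g (0+1) = g 0 := by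
              rw [show (0:ℕ)+1 = 1 from rfl, vGain_one]
            rw [e]; exact h3.2
        have hW := hg.FBW_window (Or.inl ⟨hx, hbounds⟩) a (a+m) (by omega) ham
        exact Or.inl (firstArc_of_FBW hW)
      · have hx : g 0 < 0 := lt_of_le_of_ne h0 (hg.ne1 (t := 0) (by omega))
        have hbounds : ∀ i, 0 ≤ i → i ≤ n →
            vGain g (0+1) ≤ vGain g i ∧ vGain g i ≤ vGain g 0 := by
          intro i _ h2
          have h3 := hbd i h2
          rw [cGain_zero] at h3
          constructor
          · have e : vGain g (0+1) = g 0 := by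
              rw [show (0:ℕ)+1 = 1 from rfl, vGain_one]
            rw [e]; exact h3.1
          · rw [vGain_zero]; exact h3.2
        have hW := hg.FBW_window (Or.inr ⟨hx, hbounds⟩) a (a+m) (by omega) ham
        exact Or.inl (firstArc_of_FBW hW)
    · obtain ⟨q, rfl⟩ : ∃ q, n = q + 2 := ⟨n - 2, by omega⟩
      obtain ⟨m1, rfl⟩ : ∃ m1, m = m1 + 1 := ⟨m - 1, by omega⟩
      have hsub : q + 2 - 1 = q + 1 := by omega
      rcases hLB.2.2 with ⟨h0, hbd⟩ | ⟨h0, hbd⟩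
      · rw [hsub] at h0
        have hx : 0 < g (q+1) := lt_of_le_of_ne h0 (Ne.symm (hg.ne2 (t := q) (by omega)))
        have hbounds : ∀ i, 0 ≤ i → i ≤ (q+1)+1 →
            vGain g (q+1) ≤ vGain g i ∧ vGain g i ≤ vGain g ((q+1)+1) := by
          intro i _ h2
          have h3 := hbd i (by omega)
          simp only [cGain_zero, hsub] at h3
          rw [show (q+1)+1 = q+2 from by omega]
          exact h3
        have hW := hg.LBW_window rfl (Or.inl ⟨hx, hbounds⟩) a (a + m1) (by omega) (by omega)
        exact Or.inr (lastArc_of_LBW hW)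
      · rw [hsub] at h0
        have hbounds : ∀ i, 0 ≤ i → i ≤ (q+1)+1 →
            vGain g ((q+1)+1) ≤ vGain g i ∧ vGain g i ≤ vGain g (q+1) := by
          intro i _ h2
          have h3 := hbd i (by omega)
          simp only [cGain_zero, hsub] at h3
          rw [show (q+1)+1 = q+2 from by omega]
          exact h3
        have hW := hg.LBW_window rfl (Or.inr ⟨h0, hbounds⟩) a (a + m1) (by omega) (by omega)
        exact Or.inr (lastArc_of_LBW hW)
end

end EV
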